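/- Let X_1,…,X_n be drawn from a product distribution on 𝒳^n and let M be a k-pass streaming algorithm with private randomness. Then for all i ∈ {0,1,…,k-1} and all j ∈ [n]: I(X_j; M_{(i+1,j-1)} | M_{≤i}, M_{(≤i,j-1)}) = 0. -/
import Mathlib


open scoped Classical
open Finset

noncomputable section

namespace MultiPassIC

/-- Probability of an event under a probability mass function `p` on a finite sample space. -/
def pr {Ω : Type} [Fintype Ω] (p : Ω → ℝ) (E : Ω → Prop) : ℝ :=
  ∑ ω, if E ω then p ω else 0

/-- `p` is a probability mass function on the finite type `Ω`. -/
structure IsPMF {Ω : Type} [Fintype Ω] (p : Ω → ℝ) : Prop where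
  nonneg : ∀ ω, 0 ≤ p ω
  sum_one : ∑ ω, p ω = 1

/-- Shannon entropy (base 2) of the random variable `A` under `p`. -/
def H {Ω : Type} [Fintype Ω] {α : Type} [Fintype α] (p : Ω → ℝ) (A : Ω → α) : ℝ :=
  -∑ a, pr p (fun ω => A ω = a) * Real.logb 2 (pr p (fun ω => A ω = a))

/-- Conditional mutual information `I(A ; B ∣ C)` (base 2), with the usual conventions
for vanishing probabilities. -/
def condMI {Ω : Type} [Fintype Ω] {α β γ : Type} [Fintype α] [Fintype β] [Fintype γ]
    (p : Ω → ℝ) (A : Ω → α) (B : Ω → β) (C : Ω → γ) : ℝ :=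
  ∑ a, ∑ b, ∑ c,
    pr p (fun ω => A ω = a ∧ B ω = b ∧ C ω = c) *
      Real.logb 2 ((pr p (fun ω => C ω = c) *
          pr p (fun ω => A ω = a ∧ B ω = b ∧ C ω = c)) /
        (pr p (fun ω => A ω = a ∧ C ω = c) * pr p (fun ω => B ω = b ∧ C ω = c)))

/-- Mutual information `I(A ; B)` (base 2). -/
def MI {Ω : Type} [Fintype Ω] {α β : Type} [Fintype α] [Fintype β]
    (p : Ω → ℝ) (A : Ω → α) (B : Ω → β) : ℝ :=
  condMI p A B (fun _ => (0 : Fin 1))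

/-- `X 0, …, X (n-1)` (the first `n` stream elements) are mutually independent under `p`,
i.e. they are drawn from a product distribution. -/
def IsProduct {Ω : Type} [Fintype Ω] {𝒳 : Type} (p : Ω → ℝ) (n : ℕ) (X : ℕ → Ω → 𝒳) : Prop :=
  ∀ x : ℕ → 𝒳,
    pr p (fun ω => ∀ j < n, X j ω = x j) =
      ∏ j ∈ Finset.range n, pr p (fun ω => X j ω = x j)

/-- A `k`-pass streaming algorithm on the input stream `X 0, …, X (n-1)` (0-indexed;
the paper's `X_j` is `X (j-1)`), over a finite sample space `Ω` with pmf `p`.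
`S` is the finite set of memory states, `Rv` the value space of the per-step private
randomness, `init` the initial memory state `M₀`, `R i j` the private randomness used at
step `j` of pass `i` (0-indexed), and `f i j` the corresponding transition function.
The field `indep` states that the initial state, all the per-step random seeds, and the
input stream are mutually independent. -/
structure Alg (Ω : Type) [Fintype Ω] (p : Ω → ℝ) (𝒳 : Type) [Fintype 𝒳]
    (n k : ℕ) (X : ℕ → Ω → 𝒳) where
  S : Type
  fintS : Fintype S
  Rv : Type
  fintR : Fintype Rv
  init : Ω → S
  R : ℕ → ℕ → Ω → Rv
  f : ℕ → ℕ → 𝒳 → S → Rv → S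
  indep : ∀ (m : S) (r : ℕ → ℕ → Rv) (x : ℕ → 𝒳),
    pr p (fun ω => init ω = m ∧ (∀ i < k, ∀ j < n, R i j ω = r i j) ∧ (∀ j < n, X j ω = x j))
      = pr p (fun ω => init ω = m)
        * (∏ i ∈ Finset.range k, ∏ j ∈ Finset.range n, pr p (fun ω => R i j ω = r i j))
        * pr p (fun ω => ∀ j < n, X j ω = x j)

attribute [instance] Alg.fintS Alg.fintR

variable {Ω : Type} [Fintype Ω] {p : Ω → ℝ} {𝒳 : Type} [Fintype 𝒳] {n k : ℕ} {X : ℕ → Ω → 𝒳}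

/-- Running pass `i` (0-indexed) of the algorithm for `j` steps starting from `ini`. -/
def Alg.runPass (M : Alg Ω p 𝒳 n k X) (i : ℕ) (ini : Ω → M.S) : ℕ → Ω → M.S
  | 0 => ini
  | j + 1 => fun ω =>
      if j < n ∧ i < k then
        M.f i j (X j ω) (M.runPass i ini j ω) (M.R i j ω)
      else M.runPass i ini j ω

/-- `M.passEnd i` is the memory state at the end of pass `i`; `M.passEnd 0 = M₀` is the
initial state, and `M.passEnd i` is the paper's `M_i = M_{(i,n)}`. -/
def Alg.passEnd (M : Alg Ω p 𝒳 n k X) : ℕ → Ω → M.S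
  | 0 => M.init
  | i + 1 => M.runPass i (M.passEnd i) n

/-- `M.st i j` is the memory state after reading `j` elements in pass `i+1`;
it is the paper's `M_{(i+1, j)}`. -/
def Alg.st (M : Alg Ω p 𝒳 n k X) (i j : ℕ) : Ω → M.S :=
  M.runPass i (M.passEnd i) j

/-- The multi-pass information cost
`MIC(M, μ) = Σ_{i=1}^{k} Σ_{j=1}^{n} Σ_{ℓ=1}^{j} I(M_{(i,j)}; X_ℓ | M_{(≤i,ℓ-1)}, M_{(≤i-1,j)})
  + Σ_{i=1}^{k} Σ_{j=1}^{n} Σ_{ℓ=j+1}^{n} I(M_{(i,j)}; X_ℓ | M_{(≤i-1,ℓ-1)}, M_{(≤i-1,j)})`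
(all summation indices below are 0-indexed shifts of the paper's 1-indexed ones). -/
def Alg.MIC (M : Alg Ω p 𝒳 n k X) : ℝ :=
  (∑ i ∈ Finset.range k, ∑ j ∈ Finset.range n, ∑ l ∈ Finset.range (j + 1),
    condMI p (M.st i (j + 1)) (X l)
      (fun ω => ((fun r : Fin (i + 1) => M.st r.1 l ω),
                 (fun r : Fin i => M.st r.1 (j + 1) ω))))
  + (∑ i ∈ Finset.range k, ∑ j ∈ Finset.range n, ∑ l ∈ Finset.Ico (j + 1) n,
    condMI p (M.st i (j + 1)) (X l)
      (fun ω => ((fun r : Fin i => M.st r.1 l ω),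
                 (fun r : Fin i => M.st r.1 (j + 1) ω))))

/-- The conditional information cost
`MIC_cond(M, μ) = Σ_{j=1}^{n} Σ_{ℓ=1}^{j} I(M_{(≤k,j)}; X_ℓ | M_{<k}, M_{(≤k,ℓ-1)})`. -/
def Alg.MICcond (M : Alg Ω p 𝒳 n k X) : ℝ :=
  ∑ j ∈ Finset.range n, ∑ l ∈ Finset.range (j + 1),
    condMI p (fun ω => fun r : Fin k => M.st r.1 (j + 1) ω) (X l)
      (fun ω => ((fun r : Fin k => M.passEnd r.1 ω),
                 (fun r : Fin k => M.st r.1 l ω)))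

end MultiPassIC
namespace MultiPassIC

section Generic
variable {Ω : Type} [Fintype Ω] {p : Ω → ℝ}

/-- real-valued indicator of a proposition -/
def ind (P : Prop) : ℝ := if P then 1 else 0

lemma ind_nonneg (P : Prop) : 0 ≤ ind P := by
  unfold ind; split <;> norm_num

lemma ind_and (P Q : Prop) : ind (P ∧ Q) = ind P * ind Q := by
  unfold ind; by_cases hP : P <;> by_cases hQ : Q <;> simp [hP, hQ]

lemma ind_congr {P Q : Prop} (h : P ↔ Q) : ind P = ind Q := by
  unfold ind; simp [h]

lemma ind_true {P : Prop} (h : P) : ind P = 1 := by simp [ind, h]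

lemma ind_forall {τ : Type} [Fintype τ] (P : τ → Prop) :
    ind (∀ t, P t) = ∏ t, ind (P t) := by
  by_cases h : ∀ t, P t
  · rw [ind_true h, Finset.prod_congr rfl (fun t _ => ind_true (h t))]
    simp
  · push_neg at h
    obtain ⟨t, ht⟩ := h
    have : ind (∀ t, P t) = 0 := by simp [ind]; exact ⟨t, ht⟩
    rw [this]
    exact (Finset.prod_eq_zero (Finset.mem_univ t) (by simp [ind, ht])).symm

lemma ite_eq_ind_mul (P : Prop) [Decidable P] (c : ℝ) : (if P then c else 0) = ind P * c := by
  unfold ind; split <;> simp_all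

lemma pr_eq_sum_ind (E : Ω → Prop) : pr p E = ∑ ω, ind (E ω) * p ω := by
  unfold pr
  exact Finset.sum_congr rfl fun ω _ => by rw [ite_eq_ind_mul]

lemma pr_congr {E F : Ω → Prop} (h : ∀ ω, E ω ↔ F ω) : pr p E = pr p F := by
  rw [pr_eq_sum_ind, pr_eq_sum_ind]
  exact Finset.sum_congr rfl fun ω _ => by rw [ind_congr (h ω)]

lemma pr_nonneg (hp : IsPMF p) (E : Ω → Prop) : 0 ≤ pr p E := by
  rw [pr_eq_sum_ind]
  exact Finset.sum_nonneg fun ω _ => mul_nonneg (ind_nonneg _) (hp.nonneg ω)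

lemma sum_ind_eq {τ : Type} [Fintype τ] (y : τ) (c : τ → ℝ) :
    ∑ t, ind (t = y) * c t = c y := by
  rw [Finset.sum_eq_single y]
  · simp [ind]
  · intro t _ ht; simp [ind, ht]
  · intro h; exact absurd (Finset.mem_univ y) h

lemma sum_ind_eq' {τ : Type} [Fintype τ] (y : τ) (c : τ → ℝ) :
    ∑ t, ind (y = t) * c t = c y := by
  rw [← sum_ind_eq y c]
  exact Finset.sum_congr rfl fun t _ => by rw [ind_congr eq_comm]

/-- marginalization -/
lemma pr_sum_fiber {β : Type} [Fintype β] (E : Ω → Prop) (B : Ω → β) :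
    ∑ b, pr p (fun ω => E ω ∧ B ω = b) = pr p E := by
  have : ∀ b, pr p (fun ω => E ω ∧ B ω = b) = ∑ ω, ind (E ω) * (ind (B ω = b) * p ω) := by
    intro b
    rw [pr_eq_sum_ind]
    exact Finset.sum_congr rfl fun ω _ => by rw [ind_and]; ring
  rw [Finset.sum_congr rfl fun b _ => this b, Finset.sum_comm, pr_eq_sum_ind]
  refine Finset.sum_congr rfl fun ω _ => ?_
  rw [← Finset.mul_sum]
  congr 1
  calc ∑ b, ind (B ω = b) * p ω = (∑ b, ind (B ω = b) * 1) * p ω := by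
        rw [Finset.sum_mul]; exact Finset.sum_congr rfl fun b _ => by ring
    _ = p ω := by rw [sum_ind_eq' (B ω) (fun _ => (1:ℝ))]; ring

lemma sum_pr_eq_one (hp : IsPMF p) {β : Type} [Fintype β] (B : Ω → β) :
    ∑ b, pr p (fun ω => B ω = b) = 1 := by
  have := pr_sum_fiber (p := p) (fun _ => True) B
  simp only [true_and] at this
  rw [this, pr_eq_sum_ind]
  simp only [ind_true trivial, one_mul]
  exact hp.sum_one

/-- sum over a function space of a product of per-coordinate factors -/
lemma sum_fn_prod {ι ρ : Type} [Fintype ι] [DecidableEq ι] [Fintype ρ] (g : ι → ρ → ℝ) :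
    ∑ f : ι → ρ, ∏ u, g u (f u) = ∏ u, ∑ v, g u v := by
  rw [Finset.prod_univ_sum]
  refine (Finset.sum_congr ?_ fun _ _ => rfl).symm
  simp [Fintype.piFinset_univ]

end Generic

end MultiPassIC
namespace MultiPassIC

section Factor

/-- merge of two functions along a predicate -/
def mrg {ι ρ : Type} (T : ι → Prop) (f g : ι → ρ) : ι → ρ := fun u => if T u then f u else g u

def mrgEquiv {ι ρ : Type} (T : ι → Prop) : ((ι → ρ) × (ι → ρ)) ≃ ((ι → ρ) × (ι → ρ)) where
  toFun q := (mrg T q.1 q.2, mrg T q.2 q.1)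
  invFun q := (mrg T q.1 q.2, mrg T q.2 q.1)
  left_inv q := by
    ext u <;> by_cases hu : T u <;> simp [mrg, hu]
  right_inv q := by
    ext u <;> by_cases hu : T u <;> simp [mrg, hu]

/-- Key factorization lemma: if `G` depends only on coordinates in `T` and `H` only on
coordinates outside `T`, and the per-coordinate weights each sum to 1, then the weighted
sum of `G * H` factors. -/
lemma sum_factor {ι ρ : Type} [Fintype ι] [DecidableEq ι] [Fintype ρ]
    (w : ι → ρ → ℝ) (hw : ∀ u, ∑ v, w u v = 1) (T : ι → Prop)
    (G H : (ι → ρ) → ℝ)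
    (hG : ∀ f f', (∀ u, T u → f u = f' u) → G f = G f')
    (hH : ∀ f f', (∀ u, ¬ T u → f u = f' u) → H f = H f') :
    (∑ f : ι → ρ, (∏ u, w u (f u)) * G f) * (∑ f : ι → ρ, (∏ u, w u (f u)) * H f)
      = ∑ f : ι → ρ, (∏ u, w u (f u)) * (G f * H f) := by
  have hWone : ∑ f : ι → ρ, (∏ u, w u (f u)) = 1 := by
    rw [sum_fn_prod, Finset.prod_congr rfl fun u _ => hw u]; simp
  calc (∑ f : ι → ρ, (∏ u, w u (f u)) * G f) * (∑ f : ι → ρ, (∏ u, w u (f u)) * H f)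
      = ∑ q : (ι → ρ) × (ι → ρ),
          ((∏ u, w u (q.1 u)) * G q.1) * ((∏ u, w u (q.2 u)) * H q.2) := by
        rw [Finset.sum_mul_sum]
        exact (Fintype.sum_prod_type (fun q : (ι → ρ) × (ι → ρ) =>
          ((∏ u, w u (q.1 u)) * G q.1) * ((∏ u, w u (q.2 u)) * H q.2))).symm
    _ = ∑ q : (ι → ρ) × (ι → ρ),
          (fun q : (ι → ρ) × (ι → ρ) =>
            ((∏ u, w u (q.1 u)) * (G q.1 * H q.1)) * (∏ u, w u (q.2 u))) (mrgEquiv T q) := by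
        refine Finset.sum_congr rfl fun q _ => ?_
        obtain ⟨f, g⟩ := q
        have hGf : G (mrg T f g) = G f := (hG _ _ (fun u hu => by simp [mrg, hu])).symm
        have hHg : H (mrg T f g) = H g := hH _ _ (fun u hu => by simp [mrg, hu])
        have hw2 : (∏ u, w u (f u)) * (∏ u, w u (g u))
            = (∏ u, w u (mrg T f g u)) * (∏ u, w u (mrg T g f u)) := by
          rw [← Finset.prod_mul_distrib, ← Finset.prod_mul_distrib]
          refine Finset.prod_congr rfl fun u _ => ?_
          by_cases hu : T u <;> simp [mrg, hu] <;> ring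
        simp only [mrgEquiv, Equiv.coe_fn_mk]
        calc ((∏ u, w u (f u)) * G f) * ((∏ u, w u (g u)) * H g)
            = ((∏ u, w u (f u)) * (∏ u, w u (g u))) * (G f * H g) := by ring
          _ = ((∏ u, w u (mrg T f g u)) * (∏ u, w u (mrg T g f u)))
                * (G (mrg T f g) * H (mrg T f g)) := by rw [hw2, ← hGf, hHg]
          _ = _ := by ring
    _ = ∑ q : (ι → ρ) × (ι → ρ),
          ((∏ u, w u (q.1 u)) * (G q.1 * H q.1)) * (∏ u, w u (q.2 u)) := by
        exact Equiv.sum_comp (mrgEquiv T)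
          (fun q => ((∏ u, w u (q.1 u)) * (G q.1 * H q.1)) * (∏ u, w u (q.2 u)))
    _ = ∑ f : ι → ρ, (∏ u, w u (f u)) * (G f * H f) := by
        rw [Fintype.sum_prod_type]
        rw [Finset.sum_congr rfl fun f _ => (by rw [← Finset.mul_sum, hWone, mul_one] :
          ∑ g : ι → ρ, ((∏ u, w u (f u)) * (G f * H f)) * (∏ u, w u (g u))
            = (∏ u, w u (f u)) * (G f * H f))]

end Factor

end MultiPassIC
namespace MultiPassIC

section CondMIZero
variable {Ω : Type} [Fintype Ω] {p : Ω → ℝ}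

lemma pr_pos_of_fiber {β : Type} [Fintype β] (hp : IsPMF p)
    (E : Ω → Prop) (B : Ω → β) (b : β)
    (hpos : 0 < pr p (fun ω => E ω ∧ B ω = b)) : 0 < pr p E := by
  rw [← pr_sum_fiber (p := p) E B]
  calc (0:ℝ) < pr p (fun ω => E ω ∧ B ω = b) := hpos
    _ ≤ ∑ b', pr p (fun ω => E ω ∧ B ω = b') :=
        Finset.single_le_sum (f := fun b' => pr p (fun ω => E ω ∧ B ω = b'))
          (fun b' _ => pr_nonneg hp _) (Finset.mem_univ b)

lemma condMI_eq_zero_of_factor {α β γ : Type} [Fintype α] [Fintype β] [Fintype γ]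
    (hp : IsPMF p) (A : Ω → α) (B : Ω → β) (C : Ω → γ)
    (g : α → γ → ℝ) (f : β → γ → ℝ)
    (h : ∀ a b c, pr p (fun ω => A ω = a ∧ B ω = b ∧ C ω = c) = g a c * f b c) :
    condMI p A B C = 0 := by
  unfold condMI
  refine Finset.sum_eq_zero fun a _ => Finset.sum_eq_zero fun b _ =>
    Finset.sum_eq_zero fun c _ => ?_
  by_cases habc : pr p (fun ω => A ω = a ∧ B ω = b ∧ C ω = c) = 0
  · rw [habc, zero_mul]
  have hABCpos : 0 < pr p (fun ω => A ω = a ∧ B ω = b ∧ C ω = c) :=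
    lt_of_le_of_ne (pr_nonneg hp _) (Ne.symm habc)
  have hAC : ∀ a', pr p (fun ω => A ω = a' ∧ C ω = c) = g a' c * ∑ b', f b' c := by
    intro a'
    rw [← pr_sum_fiber (p := p) (fun ω => A ω = a' ∧ C ω = c) B, Finset.mul_sum]
    refine Finset.sum_congr rfl fun b' _ => ?_
    rw [← h a' b' c]
    exact pr_congr fun ω => by tauto
  have hBC : ∀ b', pr p (fun ω => B ω = b' ∧ C ω = c) = (∑ a', g a' c) * f b' c := by
    intro b'
    rw [← pr_sum_fiber (p := p) (fun ω => B ω = b' ∧ C ω = c) A, Finset.sum_mul]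
    refine Finset.sum_congr rfl fun a' _ => ?_
    rw [← h a' b' c]
    exact pr_congr fun ω => by tauto
  have hC : pr p (fun ω => C ω = c) = (∑ a', g a' c) * (∑ b', f b' c) := by
    rw [← pr_sum_fiber (p := p) (fun ω => C ω = c) A, Finset.sum_mul]
    refine Finset.sum_congr rfl fun a' _ => ?_
    rw [← hAC a']
    exact pr_congr fun ω => by tauto
  have hACpos : 0 < pr p (fun ω => A ω = a ∧ C ω = c) := by
    refine pr_pos_of_fiber hp _ B b ?_
    refine lt_of_lt_of_le hABCpos (le_of_eq (pr_congr fun ω => by tauto))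
  have hBCpos : 0 < pr p (fun ω => B ω = b ∧ C ω = c) := by
    refine pr_pos_of_fiber hp _ A a ?_
    refine lt_of_lt_of_le hABCpos (le_of_eq (pr_congr fun ω => by tauto))
  have hg : g a c ≠ 0 ∧ (∑ b', f b' c) ≠ 0 := by
    have := hACpos.ne'
    rw [hAC a] at this
    exact ⟨left_ne_zero_of_mul this, right_ne_zero_of_mul this⟩
  have hf : (∑ a', g a' c) ≠ 0 ∧ f b c ≠ 0 := by
    have := hBCpos.ne'
    rw [hBC b] at this
    exact ⟨left_ne_zero_of_mul this, right_ne_zero_of_mul this⟩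
  have : (pr p (fun ω => C ω = c) * pr p (fun ω => A ω = a ∧ B ω = b ∧ C ω = c)) /
        (pr p (fun ω => A ω = a ∧ C ω = c) * pr p (fun ω => B ω = b ∧ C ω = c)) = 1 := by
    rw [hC, h a b c, hAC a, hBC b]
    rw [div_eq_one_iff_eq (by exact mul_ne_zero (mul_ne_zero hg.1 hg.2) (mul_ne_zero hf.1 hf.2))]
    ring
  rw [this, Real.logb_one, mul_zero]

end CondMIZero

end MultiPassIC
namespace MultiPassIC

section Semantics
variable {Ω : Type} [Fintype Ω] {p : Ω → ℝ} {𝒳 : Type} [Fintype 𝒳] {n k : ℕ} {X : ℕ → Ω → 𝒳}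

/-- Value-level run of pass `i` from position `a` to position `c`, starting in state `s`,
on inputs `x` and randomness `ρ`. -/
def runSeg (M : Alg Ω p 𝒳 n k X) (i a : ℕ) (x : ℕ → 𝒳) (ρ : ℕ → M.Rv) (s : M.S) : ℕ → M.S
  | 0 => s
  | c + 1 => if a ≤ c then
      (if c < n ∧ i < k then M.f i c (x c) (runSeg M i a x ρ s c) (ρ c)
       else runSeg M i a x ρ s c)
    else s

lemma runSeg_stop (M : Alg Ω p 𝒳 n k X) (i a : ℕ) (x : ℕ → 𝒳) (ρ : ℕ → M.Rv) (s : M.S)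
    {c : ℕ} (h : c ≤ a) : runSeg M i a x ρ s c = s := by
  cases c with
  | zero => rfl
  | succ c => rw [runSeg, if_neg (by omega)]

lemma runSeg_comp (M : Alg Ω p 𝒳 n k X) (i a bb : ℕ) (x : ℕ → 𝒳) (ρ : ℕ → M.Rv) (s : M.S)
    (hab : a ≤ bb) : ∀ c : ℕ, bb ≤ c →
    runSeg M i bb x ρ (runSeg M i a x ρ s bb) c = runSeg M i a x ρ s c := by
  intro c
  induction c with
  | zero =>
    intro hc
    have hbb : bb = 0 := by omega
    subst hbb
    rfl
  | succ c ih =>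
    intro hc
    by_cases hbc : bb ≤ c
    · simp only [runSeg]
      rw [if_pos hbc, if_pos (show a ≤ c by omega), ih hbc]
    · have : bb = c + 1 := by omega
      subst this
      rw [runSeg_stop _ _ _ _ _ _ le_rfl]

lemma runSeg_congr (M : Alg Ω p 𝒳 n k X) (i a : ℕ) (x x' : ℕ → 𝒳) (ρ ρ' : ℕ → M.Rv)
    (s : M.S) (c : ℕ)
    (hx : ∀ u, a ≤ u → u < c → u < n → x u = x' u)
    (hρ : ∀ u, a ≤ u → u < c → u < n → ρ u = ρ' u) :
    runSeg M i a x ρ s c = runSeg M i a x' ρ' s c := by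
  induction c with
  | zero => rfl
  | succ c ih =>
    have ih' := ih (fun u h1 h2 h3 => hx u h1 (by omega) h3)
      (fun u h1 h2 h3 => hρ u h1 (by omega) h3)
    rw [runSeg, runSeg, ih']
    by_cases hac : a ≤ c
    · rw [if_pos hac, if_pos hac]
      by_cases hg : c < n ∧ i < k
      · rw [if_pos hg, if_pos hg, hx c hac (by omega) hg.1, hρ c hac (by omega) hg.1]
      · rw [if_neg hg, if_neg hg]
    · rw [if_neg hac, if_neg hac]

lemma runPass_eq_runSeg (M : Alg Ω p 𝒳 n k X) (i : ℕ) (ini : Ω → M.S) (j : ℕ) (ω : Ω) :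
    M.runPass i ini j ω
      = runSeg M i 0 (fun u => X u ω) (fun u => M.R i u ω) (ini ω) j := by
  induction j with
  | zero => rfl
  | succ j ih =>
    simp only [Alg.runPass, runSeg]
    rw [if_pos (Nat.zero_le j), ih]

lemma st_eq_runSeg (M : Alg Ω p 𝒳 n k X) (i j : ℕ) (ω : Ω) :
    M.st i j ω
      = runSeg M i 0 (fun u => X u ω) (fun u => M.R i u ω) (M.passEnd i ω) j :=
  runPass_eq_runSeg M i (M.passEnd i) j ω

lemma passEnd_succ_eq (M : Alg Ω p 𝒳 n k X) (i : ℕ) (ω : Ω) :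
    M.passEnd (i + 1) ω
      = runSeg M i 0 (fun u => X u ω) (fun u => M.R i u ω) (M.passEnd i ω) n :=
  runPass_eq_runSeg M i (M.passEnd i) n ω

end Semantics

end MultiPassIC
namespace MultiPassIC

section SegProb
variable {Ω : Type} [Fintype Ω] {p : Ω → ℝ} {𝒳 : Type} [Fintype 𝒳] {n k : ℕ} {X : ℕ → Ω → 𝒳}

lemma sum_mul_ind_eq {τ : Type} [Fintype τ] (y : τ) (c : τ → ℝ) :
    ∑ t, c t * ind (t = y) = c y := by
  rw [← sum_ind_eq y c]
  exact Finset.sum_congr rfl fun t _ => by ring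

def wRp (M : Alg Ω p 𝒳 n k X) (t u : ℕ) (v : M.Rv) : ℝ := pr p (fun ω => M.R t u ω = v)

lemma wRp_sum_one (hp : IsPMF p) (M : Alg Ω p 𝒳 n k X) (t u : ℕ) :
    ∑ v, wRp M t u v = 1 := sum_pr_eq_one hp _

/-- one-step transition probability -/
def stepP (M : Alg Ω p 𝒳 n k X) (i u : ℕ) (ξ : 𝒳) (s s' : M.S) : ℝ :=
  ∑ v, ind ((if u < n ∧ i < k then M.f i u ξ s v else s) = s') * wRp M i u v

/-- probability that pass `i`, run from position `a` in state `s` on input `x`,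
is in state `s'` after position `c` (randomness of the pass integrated out) -/
def segP (M : Alg Ω p 𝒳 n k X) (i a : ℕ) (x : ℕ → 𝒳) (s : M.S) : ℕ → M.S → ℝ
  | 0 => fun s' => ind (s = s')
  | c + 1 => fun s' =>
      if a ≤ c then ∑ t', segP M i a x s c t' * stepP M i c (x c) t' s'
      else ind (s = s')

lemma stepP_triv (hp : IsPMF p) (M : Alg Ω p 𝒳 n k X) {i u : ℕ} (ξ : 𝒳) (s s' : M.S)
    (hg : ¬ (u < n ∧ i < k)) : stepP M i u ξ s s' = ind (s = s') := by
  unfold stepP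
  rw [Finset.sum_congr rfl fun v _ => by rw [if_neg hg]]
  rw [← Finset.mul_sum, wRp_sum_one hp M i u, mul_one]

lemma stepP_irrel (M : Alg Ω p 𝒳 n k X) {i u : ℕ} (hg : ¬ (u < n ∧ i < k)) (ξ ξ' : 𝒳)
    (s s' : M.S) : stepP M i u ξ s s' = stepP M i u ξ' s s' := by
  unfold stepP
  refine Finset.sum_congr rfl fun v _ => ?_
  rw [if_neg hg, if_neg hg]

lemma segP_congr (M : Alg Ω p 𝒳 n k X) (i a : ℕ) (x x' : ℕ → 𝒳) (s : M.S) (c : ℕ)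
    (hx : ∀ u, a ≤ u → u < c → u < n → x u = x' u) :
    ∀ s', segP M i a x s c s' = segP M i a x' s c s' := by
  induction c with
  | zero => intro s'; rfl
  | succ c ih =>
    intro s'
    have ih' := ih (fun u h1 h2 h3 => hx u h1 (by omega) h3)
    simp only [segP]
    by_cases hac : a ≤ c
    · rw [if_pos hac, if_pos hac]
      refine Finset.sum_congr rfl fun t' _ => ?_
      rw [ih' t']
      by_cases hcn : c < n
      · rw [hx c hac (by omega) hcn]
      · rw [stepP_irrel M (by tauto) (x c) (x' c) t' s']
    · rw [if_neg hac, if_neg hac]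

/-- extension of a finitely-supported row of randomness -/
def extR {ρ : Type} (ρ₀ : ℕ → ρ) (row : Fin n → ρ) : ℕ → ρ :=
  fun u => if h : u < n then row ⟨u, h⟩ else ρ₀ u

lemma rows_sum_one (hp : IsPMF p) (M : Alg Ω p 𝒳 n k X) (i : ℕ) :
    ∑ row : Fin n → M.Rv, (∏ u : Fin n, wRp M i u.1 (row u)) = 1 := by
  rw [sum_fn_prod (fun (u : Fin n) v => wRp M i u.1 v)]
  rw [Finset.prod_congr rfl fun u _ => wRp_sum_one hp M i u.1]
  simp

/-- The one-row identity: summing the full per-row weight against the indicator that a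
segment run reaches a given state yields `segP`. -/
lemma sum_rows_seg (hp : IsPMF p) (M : Alg Ω p 𝒳 n k X) (i a : ℕ) (x : ℕ → 𝒳)
    (ρ₀ : ℕ → M.Rv) (s : M.S) :
    ∀ (c : ℕ) (s' : M.S),
      ∑ row : Fin n → M.Rv,
        (∏ u : Fin n, wRp M i u.1 (row u)) * ind (runSeg M i a x (extR ρ₀ row) s c = s')
      = segP M i a x s c s' := by
  intro c
  induction c with
  | zero =>
    intro s'
    simp only [runSeg, segP]
    rw [Finset.sum_congr rfl fun (row : Fin n → M.Rv) _ =>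
      (mul_comm (∏ u : Fin n, wRp M i u.1 (row u)) (ind (s = s')))]
    rw [← Finset.mul_sum, rows_sum_one hp M i, mul_one]
  | succ c ih =>
    intro s'
    by_cases hac : a ≤ c
    · by_cases hg : c < n ∧ i < k
      · -- main case
        have hrow : ∀ row : Fin n → M.Rv,
            ind (runSeg M i a x (extR ρ₀ row) s (c+1) = s')
            = ∑ t', ind (runSeg M i a x (extR ρ₀ row) s c = t')
                * ind (M.f i c (x c) t' (row ⟨c, hg.1⟩) = s') := by
          intro row
          refine Eq.trans ?_ (sum_ind_eq' (runSeg M i a x (extR ρ₀ row) s c)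
            (fun t' => ind (M.f i c (x c) t' (row ⟨c, hg.1⟩) = s'))).symm
          refine ind_congr ?_
          simp only [runSeg]
          rw [if_pos hac, if_pos hg]
          have : extR ρ₀ row c = row ⟨c, hg.1⟩ := dif_pos hg.1
          rw [this]
        have hfac : ∀ t' : M.S,
            ∑ row : Fin n → M.Rv, (∏ u : Fin n, wRp M i u.1 (row u))
              * (ind (runSeg M i a x (extR ρ₀ row) s c = t')
                 * ind (M.f i c (x c) t' (row ⟨c, hg.1⟩) = s'))
            = segP M i a x s c t' * stepP M i c (x c) t' s' := by
          intro t'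
          have hG : ∀ row row' : Fin n → M.Rv, (∀ u : Fin n, u.1 < c → row u = row' u) →
              ind (runSeg M i a x (extR ρ₀ row) s c = t')
              = ind (runSeg M i a x (extR ρ₀ row') s c = t') := by
            intro row row' hagree
            refine ind_congr ?_
            rw [runSeg_congr M i a x x (extR ρ₀ row) (extR ρ₀ row') s c
              (fun _ _ _ _ => rfl)
              (fun u h1 h2 h3 => by
                simp only [extR]
                rw [dif_pos h3, dif_pos h3]
                exact hagree ⟨u, h3⟩ h2)]
          have step2 : ∑ row : Fin n → M.Rv, (∏ u : Fin n, wRp M i u.1 (row u))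
                * ind (M.f i c (x c) t' (row ⟨c, hg.1⟩) = s')
              = stepP M i c (x c) t' s' := by
            calc ∑ row : Fin n → M.Rv, (∏ u : Fin n, wRp M i u.1 (row u))
                  * ind (M.f i c (x c) t' (row ⟨c, hg.1⟩) = s')
                = ∑ row : Fin n → M.Rv, ∏ u : Fin n, (wRp M i u.1 (row u)
                    * if u = ⟨c, hg.1⟩ then ind (M.f i c (x c) t' (row u) = s') else 1) := by
                  refine Finset.sum_congr rfl fun row _ => ?_
                  rw [Finset.prod_mul_distrib]
                  congr 1
                  rw [Finset.prod_eq_single (⟨c, hg.1⟩ : Fin n)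
                    (fun u _ hu => if_neg hu) (fun h => absurd (Finset.mem_univ _) h)]
                  rw [if_pos rfl]
              _ = ∏ u : Fin n, ∑ v, (wRp M i u.1 v
                    * if u = ⟨c, hg.1⟩ then ind (M.f i c (x c) t' v = s') else 1) :=
                  sum_fn_prod (fun (u : Fin n) v => wRp M i u.1 v
                    * if u = ⟨c, hg.1⟩ then ind (M.f i c (x c) t' v = s') else 1)
              _ = stepP M i c (x c) t' s' := by
                  rw [Finset.prod_eq_single (⟨c, hg.1⟩ : Fin n)
                    (fun u _ hu => by
                      rw [Finset.sum_congr rfl fun v _ => by rw [if_neg hu, mul_one]]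
                      exact wRp_sum_one hp M i u.1)
                    (fun h => absurd (Finset.mem_univ _) h)]
                  unfold stepP
                  refine Finset.sum_congr rfl fun v _ => ?_
                  rw [if_pos rfl, if_pos hg]
                  ring
          refine Eq.trans (sum_factor (fun (u : Fin n) v => wRp M i u.1 v)
            (fun u => wRp_sum_one hp M i u.1) (fun u => u.1 < c)
            (fun row => ind (runSeg M i a x (extR ρ₀ row) s c = t'))
            (fun row => ind (M.f i c (x c) t' (row ⟨c, hg.1⟩) = s'))
            (fun row row' hagree => hG row row' (fun u hu => hagree u hu))
            (fun row row' hagree => by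
              refine ind_congr ?_
              rw [hagree ⟨c, hg.1⟩ (by simp)])).symm ?_
          rw [ih t', step2]
        calc ∑ row : Fin n → M.Rv, (∏ u : Fin n, wRp M i u.1 (row u))
                * ind (runSeg M i a x (extR ρ₀ row) s (c+1) = s')
            = ∑ t', ∑ row : Fin n → M.Rv, (∏ u : Fin n, wRp M i u.1 (row u))
                * (ind (runSeg M i a x (extR ρ₀ row) s c = t')
                   * ind (M.f i c (x c) t' (row ⟨c, hg.1⟩) = s')) := by
              rw [Finset.sum_comm]
              refine Finset.sum_congr rfl fun row _ => ?_
              rw [hrow row, Finset.mul_sum]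
          _ = ∑ t', segP M i a x s c t' * stepP M i c (x c) t' s' :=
              Finset.sum_congr rfl fun t' _ => hfac t'
          _ = segP M i a x s (c+1) s' := by
              simp only [segP]
              rw [if_pos hac]
      · -- guard false: step is trivial
        have heq : ∀ row : Fin n → M.Rv,
            runSeg M i a x (extR ρ₀ row) s (c+1) = runSeg M i a x (extR ρ₀ row) s c := by
          intro row
          simp only [runSeg]
          rw [if_pos hac, if_neg hg]
        calc ∑ row : Fin n → M.Rv, (∏ u : Fin n, wRp M i u.1 (row u))
              * ind (runSeg M i a x (extR ρ₀ row) s (c+1) = s')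
            = segP M i a x s c s' := by
              rw [Finset.sum_congr rfl fun row _ => by rw [heq row]]
              exact ih s'
          _ = segP M i a x s (c+1) s' := by
              simp only [segP]
              rw [if_pos hac]
              rw [Finset.sum_congr rfl fun t' _ => by rw [stepP_triv hp M (x c) t' s' hg]]
              rw [sum_mul_ind_eq s' (fun t' => segP M i a x s c t')]
    · -- c + 1 ≤ a
      have heq : ∀ row : Fin n → M.Rv,
          runSeg M i a x (extR ρ₀ row) s (c+1) = s := by
        intro row
        exact runSeg_stop M i a x _ s (by omega)
      simp only [segP]
      rw [if_neg hac]
      rw [Finset.sum_congr rfl fun row _ => by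
        rw [heq row, mul_comm ((∏ u : Fin n, wRp M i u.1 (row u))) (ind (s = s'))]]
      rw [← Finset.mul_sum, rows_sum_one hp M i, mul_one]

end SegProb

end MultiPassIC
namespace MultiPassIC

section Atomize
variable {Ω : Type} [Fintype Ω] {p : Ω → ℝ} {𝒳 : Type} [Fintype 𝒳] {n k : ℕ} {X : ℕ → Ω → 𝒳}

lemma nonempty_of_pmf (hp : IsPMF p) : Nonempty Ω := by
  by_contra h
  have : ∑ ω : Ω, p ω = 0 := by
    rw [Finset.sum_eq_zero]
    intro ω _
    exact absurd ⟨ω⟩ h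
  rw [hp.sum_one] at this
  norm_num at this

lemma ind_mul_ind_congr {A B C : Prop} (h : A → (B ↔ C)) :
    ind A * ind B = ind A * ind C := by
  by_cases hA : A
  · rw [ind_congr (h hA)]
  · simp [ind, hA]

/-- Atomization: the probability of an event determined by
`(M₀, (R i j)_{i<k,j<n}, (X j)_{j<n})` is a sum of fully-factored atom weights. -/
lemma pr_atomize (hp : IsPMF p) (hprod : IsProduct p n X) (M : Alg Ω p 𝒳 n k X)
    (ω₀ : Ω)
    (E : Ω → Prop) (Φ : M.S → (Fin k → Fin n → M.Rv) → (Fin n → 𝒳) → Prop)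
    (hE : ∀ (ω : Ω) (m : M.S) (r' : Fin k → Fin n → M.Rv) (x' : Fin n → 𝒳),
      M.init ω = m → (∀ (t : Fin k) (u : Fin n), M.R t.1 u.1 ω = r' t u) →
      (∀ u : Fin n, X u.1 ω = x' u) → (E ω ↔ Φ m r' x')) :
    pr p E = ∑ m, ∑ r' : Fin k → Fin n → M.Rv, ∑ x' : Fin n → 𝒳,
      ind (Φ m r' x') * (pr p (fun ω => M.init ω = m)
        * (∏ t : Fin k, ∏ u : Fin n, wRp M t.1 u.1 (r' t u))
        * (∏ u : Fin n, pr p (fun ω => X u.1 ω = x' u))) := by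
  -- the atom event
  set D : M.S → (Fin k → Fin n → M.Rv) → (Fin n → 𝒳) → Ω → Prop :=
    fun m r' x' ω => M.init ω = m ∧ (∀ (t : Fin k) (u : Fin n), M.R t.1 u.1 ω = r' t u)
      ∧ (∀ u : Fin n, X u.1 ω = x' u) with hD
  have key1 : pr p E = ∑ m, ∑ r' : Fin k → Fin n → M.Rv, ∑ x' : Fin n → 𝒳,
      ind (Φ m r' x') * pr p (D m r' x') := by
    have hsplit : ∀ ω, ind (E ω) * p ω
        = ∑ m, ∑ r' : Fin k → Fin n → M.Rv, ∑ x' : Fin n → 𝒳,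
            ind (D m r' x' ω) * (ind (E ω) * p ω) := by
      intro ω
      have : ∀ (m : M.S) (r' : Fin k → Fin n → M.Rv),
          ∑ x' : Fin n → 𝒳, ind (D m r' x' ω) * (ind (E ω) * p ω)
          = ind (M.init ω = m) * (ind (∀ (t : Fin k) (u : Fin n), M.R t.1 u.1 ω = r' t u)
              * (ind (E ω) * p ω)) := by
        intro m r'
        rw [Finset.sum_congr rfl fun x' _ => by
          rw [show ind (D m r' x' ω) = ind (M.init ω = m)
              * (ind (∀ (t : Fin k) (u : Fin n), M.R t.1 u.1 ω = r' t u)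
                * ind ((fun u : Fin n => X u.1 ω) = x')) from by
            rw [hD, ind_and, ind_and]
            congr 2
            exact ind_congr funext_iff.symm]]
        calc ∑ x' : Fin n → 𝒳, ind (M.init ω = m)
              * (ind (∀ (t : Fin k) (u : Fin n), M.R t.1 u.1 ω = r' t u)
                * ind ((fun u : Fin n => X u.1 ω) = x')) * (ind (E ω) * p ω)
            = ∑ x' : Fin n → 𝒳, ind ((fun u : Fin n => X u.1 ω) = x')
              * (ind (M.init ω = m) * (ind (∀ (t : Fin k) (u : Fin n), M.R t.1 u.1 ω = r' t u)
                 * (ind (E ω) * p ω))) := Finset.sum_congr rfl fun x' _ => by ring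
          _ = _ := sum_ind_eq' (fun u : Fin n => X u.1 ω) _
      rw [Finset.sum_congr rfl fun m _ => Finset.sum_congr rfl fun r' _ => this m r']
      rw [Finset.sum_congr rfl fun m _ =>
        (by
          calc ∑ r' : Fin k → Fin n → M.Rv, ind (M.init ω = m)
                * (ind (∀ (t : Fin k) (u : Fin n), M.R t.1 u.1 ω = r' t u) * (ind (E ω) * p ω))
              = ∑ r' : Fin k → Fin n → M.Rv, ind ((fun (t : Fin k) (u : Fin n) => M.R t.1 u.1 ω) = r')
                * (ind (M.init ω = m) * (ind (E ω) * p ω)) := by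
                refine Finset.sum_congr rfl fun r' _ => ?_
                rw [ind_congr (show (∀ (t : Fin k) (u : Fin n), M.R t.1 u.1 ω = r' t u)
                    ↔ ((fun (t : Fin k) (u : Fin n) => M.R t.1 u.1 ω) = r') from by
                  rw [funext_iff]
                  constructor
                  · intro h; intro t; funext u; exact h t u
                  · intro h; intro t u; exact congrFun (h t) u)]
                ring
            _ = ind (M.init ω = m) * (ind (E ω) * p ω) :=
                sum_ind_eq' (fun (t : Fin k) (u : Fin n) => M.R t.1 u.1 ω) _ :
          ∑ r' : Fin k → Fin n → M.Rv, ind (M.init ω = m)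
            * (ind (∀ (t : Fin k) (u : Fin n), M.R t.1 u.1 ω = r' t u) * (ind (E ω) * p ω))
          = ind (M.init ω = m) * (ind (E ω) * p ω))]
      rw [sum_ind_eq' (M.init ω) (fun m => ind (E ω) * p ω)]
    calc pr p E = ∑ ω, ind (E ω) * p ω := pr_eq_sum_ind E
      _ = ∑ ω, ∑ m, ∑ r' : Fin k → Fin n → M.Rv, ∑ x' : Fin n → 𝒳,
            ind (D m r' x' ω) * (ind (E ω) * p ω) :=
          Finset.sum_congr rfl fun ω _ => hsplit ω
      _ = ∑ m, ∑ r' : Fin k → Fin n → M.Rv, ∑ x' : Fin n → 𝒳, ∑ ω,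
            ind (D m r' x' ω) * (ind (E ω) * p ω) := by
          rw [Finset.sum_comm]
          refine Finset.sum_congr rfl fun m _ => ?_
          rw [Finset.sum_comm]
          refine Finset.sum_congr rfl fun r' _ => ?_
          rw [Finset.sum_comm]
      _ = _ := by
          refine Finset.sum_congr rfl fun m _ => Finset.sum_congr rfl fun r' _ =>
            Finset.sum_congr rfl fun x' _ => ?_
          rw [pr_eq_sum_ind (D m r' x'), Finset.mul_sum]
          refine Finset.sum_congr rfl fun ω _ => ?_
          have : ind (D m r' x' ω) * ind (E ω) = ind (D m r' x' ω) * ind (Φ m r' x') := by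
            refine ind_mul_ind_congr ?_
            rintro ⟨h1, h2, h3⟩
            exact hE ω m r' x' h1 h2 h3
          calc ind (D m r' x' ω) * (ind (E ω) * p ω)
              = (ind (D m r' x' ω) * ind (E ω)) * p ω := by ring
            _ = (ind (D m r' x' ω) * ind (Φ m r' x')) * p ω := by rw [this]
            _ = ind (Φ m r' x') * (ind (D m r' x' ω) * p ω) := by ring
  rw [key1]
  refine Finset.sum_congr rfl fun m _ => Finset.sum_congr rfl fun r' _ =>
    Finset.sum_congr rfl fun x' _ => ?_
  congr 1
  -- pr of atom equals the factored weight, via `indep` and `IsProduct`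
  set rbar : ℕ → ℕ → M.Rv := fun t u =>
    if h : t < k ∧ u < n then r' ⟨t, h.1⟩ ⟨u, h.2⟩ else M.R t u ω₀ with hrbar
  set xbar : ℕ → 𝒳 := fun u => if h : u < n then x' ⟨u, h⟩ else X u ω₀ with hxbar
  have hiff : ∀ ω, D m r' x' ω ↔ (M.init ω = m ∧ (∀ t < k, ∀ u < n, M.R t u ω = rbar t u)
      ∧ (∀ u < n, X u ω = xbar u)) := by
    intro ω
    rw [hD]
    constructor
    · rintro ⟨h1, h2, h3⟩
      refine ⟨h1, fun t ht u hu => ?_, fun u hu => ?_⟩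
      · rw [hrbar]; simp only [dif_pos (And.intro ht hu)]; exact h2 ⟨t, ht⟩ ⟨u, hu⟩
      · rw [hxbar]; simp only [dif_pos hu]; exact h3 ⟨u, hu⟩
    · rintro ⟨h1, h2, h3⟩
      refine ⟨h1, fun t u => ?_, fun u => ?_⟩
      · have := h2 t.1 t.2 u.1 u.2
        rw [hrbar] at this
        simpa [dif_pos (And.intro t.2 u.2)] using this
      · have := h3 u.1 u.2
        rw [hxbar] at this
        simpa [dif_pos u.2] using this
  rw [pr_congr hiff, M.indep m rbar xbar, hprod xbar]
  congr 1
  · congr 1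
    rw [← Fin.prod_univ_eq_prod_range (fun t => ∏ u ∈ Finset.range n, pr p fun ω => M.R t u ω = rbar t u) k]
    refine Finset.prod_congr rfl fun t _ => ?_
    rw [← Fin.prod_univ_eq_prod_range (fun u => pr p fun ω => M.R t.1 u ω = rbar t.1 u) n]
    refine Finset.prod_congr rfl fun u _ => ?_
    rw [hrbar]
    simp only [dif_pos (And.intro t.2 u.2)]
    rfl
  · rw [← Fin.prod_univ_eq_prod_range (fun u => pr p fun ω => X u ω = xbar u) n]
    refine Finset.prod_congr rfl fun u _ => ?_
    rw [hxbar]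
    simp only [dif_pos u.2]

end Atomize

end MultiPassIC
namespace MultiPassIC

section Chain
variable {Ω : Type} [Fintype Ω] {p : Ω → ℝ} {𝒳 : Type} [Fintype 𝒳] {n k : ℕ} {X : ℕ → Ω → 𝒳}

lemma chain_iff (M : Alg Ω p 𝒳 n k X) (i J : ℕ) (hJn : J ≤ n)
    (meN ssN : ℕ → M.S) (b : M.S) (ω : Ω) :
    ((∀ t, t ≤ i → M.passEnd t ω = meN t) ∧ (∀ t, t < i → M.st t J ω = ssN t)
      ∧ M.st i J ω = b)
    ↔ (M.init ω = meN 0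
       ∧ (∀ t, t < i →
            (runSeg M t 0 (fun u => X u ω) (fun u => M.R t u ω) (meN t) J = ssN t
             ∧ runSeg M t J (fun u => X u ω) (fun u => M.R t u ω) (ssN t) n = meN (t+1)))
       ∧ runSeg M i 0 (fun u => X u ω) (fun u => M.R i u ω) (meN i) J = b) := by
  constructor
  · rintro ⟨h1, h2, h3⟩
    refine ⟨?_, fun t ht => ⟨?_, ?_⟩, ?_⟩
    · rw [← h1 0 (Nat.zero_le i)]; rfl
    · rw [← h2 t ht, st_eq_runSeg, h1 t (le_of_lt ht)]
    · have hL : runSeg M t 0 (fun u => X u ω) (fun u => M.R t u ω) (meN t) J = ssN t := by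
        rw [← h2 t ht, st_eq_runSeg, h1 t (le_of_lt ht)]
      rw [← hL, runSeg_comp M t 0 J _ _ _ (Nat.zero_le J) n hJn, ← h1 t (le_of_lt ht),
        ← passEnd_succ_eq, h1 (t+1) ht]
    · rw [← h3, st_eq_runSeg, h1 i le_rfl]
  · rintro ⟨h1, h2, h3⟩
    have hpe : ∀ t, t ≤ i → M.passEnd t ω = meN t := by
      intro t
      induction t with
      | zero => intro _; exact h1
      | succ t ih =>
        intro ht
        have ht' : t < i := by omega
        rw [passEnd_succ_eq, ih (by omega), ← runSeg_comp M t 0 J _ _ _ (Nat.zero_le J) n hJn,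
          (h2 t ht').1, (h2 t ht').2]
    refine ⟨hpe, fun t ht => ?_, ?_⟩
    · rw [st_eq_runSeg, hpe t (le_of_lt ht), (h2 t ht).1]
    · rw [st_eq_runSeg, hpe i le_rfl, h3]

end Chain

end MultiPassIC
namespace MultiPassIC

/-- Corollary `indep2`: for a `k`-pass streaming algorithm on a product
distribution, for all `i ∈ {0,1,…,k-1}` and `j ∈ [n]`:
`I(X_j; M_{(i+1,j-1)} | M_{≤i}, M_{(≤i,j-1)}) = 0`.
(0-shifted indices: the paper's `X_j` is `X (j-1)`, `M_{(i+1,j-1)}` is `M.st i (j-1)`,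
and `M_r` is `M.passEnd r`.) -/
theorem next_pass_prev_state_indep
    {Ω : Type} [Fintype Ω] {p : Ω → ℝ} {𝒳 : Type} [Fintype 𝒳] {n k : ℕ}
    {X : ℕ → Ω → 𝒳}
    (hp : IsPMF p) (hprod : IsProduct p n X)
    (M : Alg Ω p 𝒳 n k X) :
    ∀ i : ℕ, i < k → ∀ j : ℕ, 1 ≤ j → j ≤ n →
      condMI p
        (X (j - 1))
        (M.st i (j - 1))
        (fun ω => ((fun r : Fin (i + 1) => M.passEnd r.1 ω),
                   (fun r : Fin i => M.st r.1 (j - 1) ω))) = 0 := by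
  intro i hik j hj1 hjn
  obtain ⟨ω₀⟩ := nonempty_of_pmf hp
  set J := j - 1 with hJdef
  have hJn : J < n := by omega
  set ρ₀ : ℕ → M.Rv := fun _ => M.R 0 0 ω₀ with hρ₀
  set extX : (Fin n → 𝒳) → ℕ → 𝒳 :=
    fun x' u => if h : u < n then x' ⟨u, h⟩ else X u ω₀ with hextX
  set meN : ((Fin (i+1) → M.S) × (Fin i → M.S)) → ℕ → M.S :=
    fun c t => if h : t < i + 1 then c.1 ⟨t, h⟩ else M.init ω₀ with hmeN
  set ssN : ((Fin (i+1) → M.S) × (Fin i → M.S)) → ℕ → M.S :=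
    fun c t => if h : t < i then c.2 ⟨t, h⟩ else M.init ω₀ with hssN
  set gL : M.S → ((Fin (i+1) → M.S) × (Fin i → M.S)) → (ℕ → 𝒳) → ℝ :=
    fun b c x => (∏ t ∈ Finset.range i, segP M t 0 x (meN c t) J (ssN c t))
      * segP M i 0 x (meN c i) J b with hgL
  set gR : ((Fin (i+1) → M.S) × (Fin i → M.S)) → (ℕ → 𝒳) → ℝ :=
    fun c x => ∏ t ∈ Finset.range i, segP M t J x (ssN c t) n (meN c (t+1)) with hgR
  refine condMI_eq_zero_of_factor hp _ _ _
    (fun a c => ∑ x' : Fin n → 𝒳,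
      (∏ u : Fin n, pr p (fun ω => X u.1 ω = x' u)) * (ind (extX x' J = a) * gR c (extX x')))
    (fun b c => (pr p (fun ω => M.init ω = meN c 0)
      * ∑ x' : Fin n → 𝒳,
        (∏ u : Fin n, pr p (fun ω => X u.1 ω = x' u)) * gL b c (extX x')))
    ?_
  intro a b c
  set ψ : ℕ → (Fin n → M.Rv) → (Fin n → 𝒳) → Prop := fun t row x' =>
    if t < i then
      (runSeg M t 0 (extX x') (extR ρ₀ row) (meN c t) J = ssN c t
       ∧ runSeg M t J (extX x') (extR ρ₀ row) (ssN c t) n = meN c (t+1))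
    else if t = i then runSeg M i 0 (extX x') (extR ρ₀ row) (meN c i) J = b
    else True with hψ
  set Φ : M.S → (Fin k → Fin n → M.Rv) → (Fin n → 𝒳) → Prop := fun m r' x' =>
    m = meN c 0 ∧ extX x' J = a ∧ ∀ t : Fin k, ψ t.1 (r' t) x' with hΦ
  -- the event determines Φ
  have hE : ∀ (ω : Ω) (m : M.S) (r' : Fin k → Fin n → M.Rv) (x' : Fin n → 𝒳),
      M.init ω = m → (∀ (t : Fin k) (u : Fin n), M.R t.1 u.1 ω = r' t u) →
      (∀ u : Fin n, X u.1 ω = x' u) →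
      ((X J ω = a ∧ M.st i J ω = b ∧
        ((fun r : Fin (i + 1) => M.passEnd r.1 ω), (fun r : Fin i => M.st r.1 J ω)) = c)
        ↔ Φ m r' x') := by
    intro ω m r' x' h1 h2 h3
    have hxe : ∀ u, u < n → X u ω = extX x' u := by
      intro u hu
      rw [hextX]
      simp only [dif_pos hu]
      exact (h3 ⟨u, hu⟩).symm ▸ rfl
    have hre : ∀ (t : Fin k) (u : ℕ), u < n → M.R t.1 u ω = extR ρ₀ (r' t) u := by
      intro t u hu
      unfold extR
      simp only [dif_pos hu]
      exact (h2 t ⟨u, hu⟩).symm ▸ rfl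
    have hseg : ∀ (t : Fin k) (aa cc : ℕ) (s : M.S),
        runSeg M t.1 aa (fun u => X u ω) (fun u => M.R t.1 u ω) s cc
        = runSeg M t.1 aa (extX x') (extR ρ₀ (r' t)) s cc := by
      intro t aa cc s
      exact runSeg_congr M t.1 aa _ _ _ _ s cc
        (fun u _ _ h3' => hxe u h3') (fun u _ _ h3' => hre t u h3')
    have hCc : (((fun r : Fin (i + 1) => M.passEnd r.1 ω), (fun r : Fin i => M.st r.1 J ω)) = c)
        ↔ ((∀ t, t ≤ i → M.passEnd t ω = meN c t) ∧ (∀ t, t < i → M.st t J ω = ssN c t)) := by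
      rw [Prod.ext_iff]
      simp only [funext_iff]
      constructor
      · rintro ⟨hh1, hh2⟩
        constructor
        · intro t ht
          rw [hmeN]
          simp only [dif_pos (show t < i + 1 by omega)]
          exact hh1 ⟨t, by omega⟩
        · intro t ht
          rw [hssN]
          simp only [dif_pos ht]
          exact hh2 ⟨t, ht⟩
      · rintro ⟨hh1, hh2⟩
        constructor
        · intro r
          have := hh1 r.1 (by omega)
          rw [hmeN] at this
          simpa only [dif_pos r.2, Fin.eta] using this
        · intro r
          have := hh2 r.1 r.2
          rw [hssN] at this
          simpa only [dif_pos r.2, Fin.eta] using this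
    constructor
    · rintro ⟨ha, hb, hc⟩
      obtain ⟨hme, hss⟩ := hCc.mp hc
      have := (chain_iff M i J (le_of_lt hJn) (meN c) (ssN c) b ω).mp ⟨hme, hss, hb⟩
      obtain ⟨c1, c2, c3⟩ := this
      refine ⟨by rw [← h1, c1], by rw [← hxe J hJn, ha], ?_⟩
      intro t
      simp only [hψ]
      by_cases hti : t.1 < i
      · rw [if_pos hti]
        exact ⟨(hseg t 0 J (meN c t.1)).symm.trans (c2 t.1 hti).1,
               (hseg t J n (ssN c t.1)).symm.trans (c2 t.1 hti).2⟩
      · by_cases hti' : t.1 = i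
        · rw [if_neg hti, if_pos hti']
          rw [← hti'] at c3 ⊢
          exact (hseg t 0 J (meN c t.1)).symm.trans c3
        · rw [if_neg hti, if_neg hti']
          trivial
    · rintro ⟨hm, hxa, hall⟩
      have c2 : ∀ t, t < i →
          (runSeg M t 0 (fun u => X u ω) (fun u => M.R t u ω) (meN c t) J = ssN c t
           ∧ runSeg M t J (fun u => X u ω) (fun u => M.R t u ω) (ssN c t) n = meN c (t+1)) := by
        intro t ht
        have htk : t < k := by omega
        have hthis := hall ⟨t, htk⟩
        simp only [hψ] at hthis
        rw [if_pos ht] at hthis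
        exact ⟨(hseg ⟨t, htk⟩ 0 J (meN c t)).trans hthis.1,
               (hseg ⟨t, htk⟩ J n (ssN c t)).trans hthis.2⟩
      have c3 : runSeg M i 0 (fun u => X u ω) (fun u => M.R i u ω) (meN c i) J = b := by
        have hthis : runSeg M i 0 (extX x') (extR ρ₀ (r' ⟨i, hik⟩)) (meN c i) J = b := by
          have := hall ⟨i, hik⟩
          simp only [hψ, lt_irrefl, if_false, if_true, reduceIte] at this
          exact this
        exact (hseg ⟨i, hik⟩ 0 J (meN c i)).trans hthis
      have := (chain_iff M i J (le_of_lt hJn) (meN c) (ssN c) b ω).mpr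
        ⟨by rw [h1, hm], c2, c3⟩
      obtain ⟨hme, hss, hb⟩ := this
      exact ⟨by rw [hxe J hJn, hxa], hb, hCc.mpr ⟨hme, hss⟩⟩
  have hatom := pr_atomize hp hprod M ω₀
    (fun ω => X J ω = a ∧ M.st i J ω = b ∧
      ((fun r : Fin (i + 1) => M.passEnd r.1 ω), (fun r : Fin i => M.st r.1 J ω)) = c)
    Φ hE
  rw [hatom]
  set rvN : (Fin n → 𝒳) → ℕ → ℝ := fun x' t =>
    if t < i then segP M t 0 (extX x') (meN c t) J (ssN c t)
      * segP M t J (extX x') (ssN c t) n (meN c (t+1))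
    else if t = i then segP M i 0 (extX x') (meN c i) J b
    else 1 with hrvN
  have hkeyC : ∀ (x' : Fin n → 𝒳) (t : Fin k),
      ∑ row : Fin n → M.Rv, ind (ψ t.1 row x') * (∏ u : Fin n, wRp M t.1 u.1 (row u))
      = rvN x' t.1 := by
    intro x' t
    by_cases hti : t.1 < i
    · simp only [hψ, hrvN, if_pos hti]
      calc ∑ row : Fin n → M.Rv,
            ind (runSeg M t.1 0 (extX x') (extR ρ₀ row) (meN c t.1) J = ssN c t.1
              ∧ runSeg M t.1 J (extX x') (extR ρ₀ row) (ssN c t.1) n = meN c (t.1+1))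
            * (∏ u : Fin n, wRp M t.1 u.1 (row u))
          = ∑ row : Fin n → M.Rv, (∏ u : Fin n, wRp M t.1 u.1 (row u))
            * (ind (runSeg M t.1 0 (extX x') (extR ρ₀ row) (meN c t.1) J = ssN c t.1)
              * ind (runSeg M t.1 J (extX x') (extR ρ₀ row) (ssN c t.1) n = meN c (t.1+1))) := by
            refine Finset.sum_congr rfl fun row _ => ?_
            rw [ind_and]
            ring
        _ = (∑ row : Fin n → M.Rv, (∏ u : Fin n, wRp M t.1 u.1 (row u))
              * ind (runSeg M t.1 0 (extX x') (extR ρ₀ row) (meN c t.1) J = ssN c t.1))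
            * (∑ row : Fin n → M.Rv, (∏ u : Fin n, wRp M t.1 u.1 (row u))
              * ind (runSeg M t.1 J (extX x') (extR ρ₀ row) (ssN c t.1) n = meN c (t.1+1))) := by
            refine (sum_factor (fun (u : Fin n) v => wRp M t.1 u.1 v)
              (fun u => wRp_sum_one hp M t.1 u.1) (fun u => u.1 < J)
              (fun row => ind (runSeg M t.1 0 (extX x') (extR ρ₀ row) (meN c t.1) J = ssN c t.1))
              (fun row => ind (runSeg M t.1 J (extX x') (extR ρ₀ row) (ssN c t.1) n = meN c (t.1+1)))
              ?_ ?_).symm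
            · intro f f' hagree
              refine ind_congr ?_
              rw [runSeg_congr M t.1 0 (extX x') (extX x') (extR ρ₀ f) (extR ρ₀ f') _ J
                (fun _ _ _ _ => rfl)
                (fun u h1 h2 h3 => by
                  simp only [extR]
                  rw [dif_pos h3, dif_pos h3, hagree ⟨u, h3⟩ h2])]
            · intro f f' hagree
              refine ind_congr ?_
              rw [runSeg_congr M t.1 J (extX x') (extX x') (extR ρ₀ f) (extR ρ₀ f') _ n
                (fun _ _ _ _ => rfl)
                (fun u h1 h2 h3 => by
                  simp only [extR]
                  rw [dif_pos h3, dif_pos h3, hagree ⟨u, h3⟩ (by show ¬ (u < J); omega)])]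
        _ = segP M t.1 0 (extX x') (meN c t.1) J (ssN c t.1)
            * segP M t.1 J (extX x') (ssN c t.1) n (meN c (t.1+1)) := by
            rw [sum_rows_seg hp M t.1 0 (extX x') ρ₀ (meN c t.1) J (ssN c t.1),
              sum_rows_seg hp M t.1 J (extX x') ρ₀ (ssN c t.1) n (meN c (t.1+1))]
    · by_cases hti' : t.1 = i
      · simp only [hψ, hrvN, if_neg hti, if_pos hti']
        rw [Finset.sum_congr rfl fun (row : Fin n → M.Rv) _ => mul_comm
          (ind (runSeg M i 0 (extX x') (extR ρ₀ row) (meN c i) J = b))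
          (∏ u : Fin n, wRp M t.1 u.1 (row u))]
        rw [hti']
        exact sum_rows_seg hp M i 0 (extX x') ρ₀ (meN c i) J b
      · simp only [hψ, hrvN, if_neg hti, if_neg hti']
        rw [Finset.sum_congr rfl fun (row : Fin n → M.Rv) _ => by
          rw [ind_true trivial, one_mul]]
        exact rows_sum_one hp M t.1
  have hkeyB : ∀ x' : Fin n → 𝒳,
      ∑ r' : Fin k → Fin n → M.Rv, ind (∀ t : Fin k, ψ t.1 (r' t) x')
        * (∏ t : Fin k, ∏ u : Fin n, wRp M t.1 u.1 (r' t u))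
      = ∏ t : Fin k, rvN x' t.1 := by
    intro x'
    calc ∑ r' : Fin k → Fin n → M.Rv, ind (∀ t : Fin k, ψ t.1 (r' t) x')
          * (∏ t : Fin k, ∏ u : Fin n, wRp M t.1 u.1 (r' t u))
        = ∑ r' : Fin k → Fin n → M.Rv, ∏ t : Fin k,
            (ind (ψ t.1 (r' t) x') * (∏ u : Fin n, wRp M t.1 u.1 (r' t u))) := by
          refine Finset.sum_congr rfl fun r' _ => ?_
          rw [ind_forall, ← Finset.prod_mul_distrib]
      _ = ∏ t : Fin k, ∑ row : Fin n → M.Rv,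
            (ind (ψ t.1 row x') * (∏ u : Fin n, wRp M t.1 u.1 (row u))) :=
          sum_fn_prod (fun (t : Fin k) (row : Fin n → M.Rv) =>
            ind (ψ t.1 row x') * (∏ u : Fin n, wRp M t.1 u.1 (row u)))
      _ = ∏ t : Fin k, rvN x' t.1 := Finset.prod_congr rfl fun t _ => hkeyC x' t
  have hkeyD : ∀ x' : Fin n → 𝒳,
      ∏ t : Fin k, rvN x' t.1 = gL b c (extX x') * gR c (extX x') := by
    intro x'
    rw [Fin.prod_univ_eq_prod_range (rvN x') k]
    rw [← Finset.prod_range_mul_prod_Ico (rvN x') (show i + 1 ≤ k by omega)]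
    have h2 : ∏ t ∈ Finset.Ico (i+1) k, rvN x' t = 1 := by
      refine Finset.prod_eq_one fun t ht => ?_
      simp only [hrvN]
      have := (Finset.mem_Ico.mp ht).1
      rw [if_neg (by omega), if_neg (by omega)]
    rw [h2, mul_one, Finset.prod_range_succ]
    have h3 : rvN x' i = segP M i 0 (extX x') (meN c i) J b := by
      simp [hrvN]
    rw [h3]
    rw [Finset.prod_congr rfl fun t ht => (by
      simp only [hrvN]
      rw [if_pos (Finset.mem_range.mp ht)] :
      rvN x' t = segP M t 0 (extX x') (meN c t) J (ssN c t)
        * segP M t J (extX x') (ssN c t) n (meN c (t+1)))]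
    rw [Finset.prod_mul_distrib, hgL, hgR]
    ring
  calc ∑ m, ∑ r' : Fin k → Fin n → M.Rv, ∑ x' : Fin n → 𝒳,
        ind (Φ m r' x') * (pr p (fun ω => M.init ω = m)
          * (∏ t : Fin k, ∏ u : Fin n, wRp M t.1 u.1 (r' t u))
          * (∏ u : Fin n, pr p (fun ω => X u.1 ω = x' u)))
      = ∑ m, ind (m = meN c 0) * (∑ r' : Fin k → Fin n → M.Rv, ∑ x' : Fin n → 𝒳,
          (ind (extX x' J = a) * ind (∀ t : Fin k, ψ t.1 (r' t) x'))
          * (pr p (fun ω => M.init ω = m)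
            * (∏ t : Fin k, ∏ u : Fin n, wRp M t.1 u.1 (r' t u))
            * (∏ u : Fin n, pr p (fun ω => X u.1 ω = x' u)))) := by
        refine Finset.sum_congr rfl fun m _ => ?_
        rw [Finset.mul_sum]
        refine Finset.sum_congr rfl fun r' _ => ?_
        rw [Finset.mul_sum]
        refine Finset.sum_congr rfl fun x' _ => ?_
        rw [hΦ]
        rw [show ind (m = meN c 0 ∧ extX x' J = a ∧ ∀ t : Fin k, ψ t.1 (r' t) x')
          = ind (m = meN c 0) * (ind (extX x' J = a) * ind (∀ t : Fin k, ψ t.1 (r' t) x'))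
          from by rw [ind_and, ind_and]]
        ring
    _ = ∑ r' : Fin k → Fin n → M.Rv, ∑ x' : Fin n → 𝒳,
          (ind (extX x' J = a) * ind (∀ t : Fin k, ψ t.1 (r' t) x'))
          * (pr p (fun ω => M.init ω = meN c 0)
            * (∏ t : Fin k, ∏ u : Fin n, wRp M t.1 u.1 (r' t u))
            * (∏ u : Fin n, pr p (fun ω => X u.1 ω = x' u))) :=
        sum_ind_eq (meN c 0) _
    _ = ∑ x' : Fin n → 𝒳, (∏ u : Fin n, pr p (fun ω => X u.1 ω = x' u))
          * ((gL b c (extX x')) * (ind (extX x' J = a) * gR c (extX x')))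
          * pr p (fun ω => M.init ω = meN c 0) := by
        rw [Finset.sum_comm]
        refine Finset.sum_congr rfl fun x' _ => ?_
        calc ∑ r' : Fin k → Fin n → M.Rv,
              (ind (extX x' J = a) * ind (∀ t : Fin k, ψ t.1 (r' t) x'))
              * (pr p (fun ω => M.init ω = meN c 0)
                * (∏ t : Fin k, ∏ u : Fin n, wRp M t.1 u.1 (r' t u))
                * (∏ u : Fin n, pr p (fun ω => X u.1 ω = x' u)))
            = (ind (extX x' J = a) * pr p (fun ω => M.init ω = meN c 0)
                * (∏ u : Fin n, pr p (fun ω => X u.1 ω = x' u)))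
              * ∑ r' : Fin k → Fin n → M.Rv, ind (∀ t : Fin k, ψ t.1 (r' t) x')
                * (∏ t : Fin k, ∏ u : Fin n, wRp M t.1 u.1 (r' t u)) := by
              rw [Finset.mul_sum]
              refine Finset.sum_congr rfl fun r' _ => ?_
              ring
          _ = _ := by
              rw [hkeyB x', hkeyD x']
              ring
    _ = (∑ x' : Fin n → 𝒳, (∏ u : Fin n, pr p (fun ω => X u.1 ω = x' u))
          * (gL b c (extX x') * (ind (extX x' J = a) * gR c (extX x'))))
        * pr p (fun ω => M.init ω = meN c 0) := by
        rw [Finset.sum_mul]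
    _ = ((∑ x' : Fin n → 𝒳, (∏ u : Fin n, pr p (fun ω => X u.1 ω = x' u))
            * gL b c (extX x'))
          * (∑ x' : Fin n → 𝒳, (∏ u : Fin n, pr p (fun ω => X u.1 ω = x' u))
            * (ind (extX x' J = a) * gR c (extX x'))))
        * pr p (fun ω => M.init ω = meN c 0) := by
        rw [sum_factor (fun (u : Fin n) ξ => pr p (fun ω => X u.1 ω = ξ))
          (fun u => sum_pr_eq_one hp (fun ω => X u.1 ω)) (fun u => u.1 < J)
          (fun x' => gL b c (extX x'))
          (fun x' => ind (extX x' J = a) * gR c (extX x'))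
          ?_ ?_]
        · intro f f' hagree
          have hxagree : ∀ u, u < J → u < n → extX f u = extX f' u := by
            intro u h1 h2
            rw [hextX]
            simp only [dif_pos h2]
            exact hagree ⟨u, h2⟩ h1
          rw [hgL]
          simp only
          congr 1
          · refine Finset.prod_congr rfl fun t _ => ?_
            exact segP_congr M t 0 (extX f) (extX f') (meN c t) J
              (fun u _ h2 h3 => hxagree u h2 h3) (ssN c t)
          · exact segP_congr M i 0 (extX f) (extX f') (meN c i) J
              (fun u _ h2 h3 => hxagree u h2 h3) b
        · intro f f' hagree
          have hxagree : ∀ u, ¬ u < J → u < n → extX f u = extX f' u := by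
            intro u h1 h2
            rw [hextX]
            simp only [dif_pos h2]
            exact hagree ⟨u, h2⟩ h1
          show ind (extX f J = a) * gR c (extX f) = ind (extX f' J = a) * gR c (extX f')
          congr 1
          · refine ind_congr ?_
            rw [hxagree J (lt_irrefl J) hJn]
          · rw [hgR]
            simp only
            refine Finset.prod_congr rfl fun t _ => ?_
            exact segP_congr M t J (extX f) (extX f') (ssN c t) n
              (fun u h1 h2 h3 => hxagree u (by omega) h3) (meN c (t+1))
    _ = (∑ x' : Fin n → 𝒳, (∏ u : Fin n, pr p (fun ω => X u.1 ω = x' u))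
          * (ind (extX x' J = a) * gR c (extX x')))
        * (pr p (fun ω => M.init ω = meN c 0)
          * ∑ x' : Fin n → 𝒳, (∏ u : Fin n, pr p (fun ω => X u.1 ω = x' u))
            * gL b c (extX x')) := by ring

end MultiPassIC
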